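/- Let R be a 3-CNF formula with L variables and M clauses, let p be the distribution on {0,1}^{L+M} defined by p(V=t,W=u) = 2^{-L} if u_i = C_i(t) for all i and 0 otherwise, and let F be the antimonotonic family generated by the itemsets {v_{j_1}, v_{j_2}, v_{j_3}, c_i} for each clause C_i with variables v_{j_1},v_{j_2},v_{j_3}. Then for any distribution q on {0,1}^{L+M} agreeing with p on the frequencies of all members of F: q(W=1) > 0 implies R is satisfiable. -/
import Mathlib


open Finset

def IsDist {Ω : Type*} [Fintype Ω] (p : Ω → ℝ) : Prop :=
  (∀ x, 0 ≤ p x) ∧ ∑ x, p x = 1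

/-- The truth value of clause `i` of the 3-CNF `R` under assignment `t`; a clause is a
triple of literals, each a pair (variable, sign). -/
def clauseVal {L M : ℕ} (R : Fin M → Fin 3 → Fin L × Bool)
    (t : Fin L → Bool) (i : Fin M) : Bool :=
  decide (∃ j : Fin 3, t (R i j).1 = (R i j).2)

/-- The construction distribution `p(V = t, W = u) = 2^{-L}` if `u = C(t)`, else `0`. -/
noncomputable def constr {L M : ℕ} (R : Fin M → Fin 3 → Fin L × Bool) :
    (Fin L → Bool) × (Fin M → Bool) → ℝ :=
  fun x => if x.2 = (fun i => clauseVal R x.1 i) then ((2 : ℝ) ^ L)⁻¹ else 0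

/-- The frequency `p(S = 1, T = 1)` for an itemset with variable-part `S` and
clause-part `T`. -/
def freq2 {L M : ℕ} (p : (Fin L → Bool) × (Fin M → Bool) → ℝ)
    (S : Finset (Fin L)) (T : Finset (Fin M)) : ℝ :=
  ∑ x : (Fin L → Bool) × (Fin M → Bool),
    if (∀ i ∈ S, x.1 i = true) ∧ (∀ j ∈ T, x.2 j = true) then p x else 0

/-- The set of variables appearing in clause `i`. -/
def clauseVars {L M : ℕ} (R : Fin M → Fin 3 → Fin L × Bool) (i : Fin M) :
    Finset (Fin L) :=
  Finset.image (fun j => (R i j).1) Finset.univ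

/-- If `q` agrees with the construction distribution `p` on the frequencies of the
antimonotonic family generated by the clause itemsets, then `q(W=1) > 0` implies
that `R` is satisfiable. -/


def freqB {L M : ℕ} (q : (Fin L → Bool) × (Fin M → Bool) → ℝ)
    (S : Finset (Fin L)) (T : Finset (Fin M))
    (a : Fin L → Bool) (b : Fin M → Bool) : ℝ :=
  ∑ x : (Fin L → Bool) × (Fin M → Bool),
    if (∀ i ∈ S, x.1 i = a i) ∧ (∀ j ∈ T, x.2 j = b j) then q x else 0

lemma freqB_split_left {L M : ℕ} (q : (Fin L → Bool) × (Fin M → Bool) → ℝ)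
    (S : Finset (Fin L)) (T : Finset (Fin M)) (a : Fin L → Bool) (b : Fin M → Bool)
    (i : Fin L) (hi : i ∈ S) (ha : a i = false) :
    freqB q (S.erase i) T a b
      = freqB q S T a b + freqB q S T (Function.update a i true) b := by
  unfold freqB
  rw [← Finset.sum_add_distrib]
  refine Finset.sum_congr rfl fun x _ => ?_
  have hB : (∀ j ∈ S, x.1 j = a j) ↔ (x.1 i = a i ∧ ∀ j ∈ S.erase i, x.1 j = a j) := by
    constructor
    · intro h
      exact ⟨h i hi, fun j hj => h j (Finset.mem_of_mem_erase hj)⟩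
    · rintro ⟨h1, h2⟩ j hj
      by_cases hji : j = i
      · subst hji; exact h1
      · exact h2 j (Finset.mem_erase.2 ⟨hji, hj⟩)
  have hC : (∀ j ∈ S, x.1 j = Function.update a i true j)
      ↔ (x.1 i = true ∧ ∀ j ∈ S.erase i, x.1 j = a j) := by
    constructor
    · intro h
      refine ⟨by simpa using h i hi, fun j hj => ?_⟩
      have := h j (Finset.mem_of_mem_erase hj)
      rwa [Function.update_apply, if_neg (Finset.ne_of_mem_erase hj)] at this
    · rintro ⟨h1, h2⟩ j hj
      rw [Function.update_apply]
      by_cases hji : j = i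
      · subst hji; simpa using h1
      · rw [if_neg hji]
        exact h2 j (Finset.mem_erase.2 ⟨hji, hj⟩)
  simp only [hB, hC]
  by_cases hD : ∀ j ∈ T, x.2 j = b j
  · by_cases hA : ∀ j ∈ S.erase i, x.1 j = a j
    · cases hx : x.1 i with
      | false =>
          rw [if_pos ⟨hA, hD⟩, if_pos ⟨⟨ha.symm, hA⟩, hD⟩,
            if_neg (fun h => by simp at h)]
          ring
      | true =>
          rw [if_pos ⟨hA, hD⟩, if_neg (fun h => by simp [ha] at h),
            if_pos ⟨⟨rfl, hA⟩, hD⟩]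
          ring
    · rw [if_neg (fun h => hA h.1), if_neg (fun h => hA h.1.2), if_neg (fun h => hA h.1.2)]
      ring
  · rw [if_neg (fun h => hD h.2), if_neg (fun h => hD h.2), if_neg (fun h => hD h.2)]
    ring

lemma freqB_split_right {L M : ℕ} (q : (Fin L → Bool) × (Fin M → Bool) → ℝ)
    (S : Finset (Fin L)) (T : Finset (Fin M)) (a : Fin L → Bool) (b : Fin M → Bool)
    (i : Fin M) (hi : i ∈ T) (hb : b i = false) :
    freqB q S (T.erase i) a b
      = freqB q S T a b + freqB q S T a (Function.update b i true) := by
  unfold freqB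
  rw [← Finset.sum_add_distrib]
  refine Finset.sum_congr rfl fun x _ => ?_
  have hB : (∀ j ∈ T, x.2 j = b j) ↔ (x.2 i = b i ∧ ∀ j ∈ T.erase i, x.2 j = b j) := by
    constructor
    · intro h
      exact ⟨h i hi, fun j hj => h j (Finset.mem_of_mem_erase hj)⟩
    · rintro ⟨h1, h2⟩ j hj
      by_cases hji : j = i
      · subst hji; exact h1
      · exact h2 j (Finset.mem_erase.2 ⟨hji, hj⟩)
  have hC : (∀ j ∈ T, x.2 j = Function.update b i true j)
      ↔ (x.2 i = true ∧ ∀ j ∈ T.erase i, x.2 j = b j) := by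
    constructor
    · intro h
      refine ⟨by simpa using h i hi, fun j hj => ?_⟩
      have := h j (Finset.mem_of_mem_erase hj)
      rwa [Function.update_apply, if_neg (Finset.ne_of_mem_erase hj)] at this
    · rintro ⟨h1, h2⟩ j hj
      rw [Function.update_apply]
      by_cases hji : j = i
      · subst hji; simpa using h1
      · rw [if_neg hji]
        exact h2 j (Finset.mem_erase.2 ⟨hji, hj⟩)
  simp only [hB, hC]
  by_cases hD : ∀ j ∈ S, x.1 j = a j
  · by_cases hA : ∀ j ∈ T.erase i, x.2 j = b j
    · cases hx : x.2 i with
      | false =>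
          rw [if_pos ⟨hD, hA⟩, if_pos ⟨hD, hb.symm, hA⟩,
            if_neg (fun h => by simp at h)]
          ring
      | true =>
          rw [if_pos ⟨hD, hA⟩, if_neg (fun h => by simp [hb] at h),
            if_pos ⟨hD, rfl, hA⟩]
          ring
    · rw [if_neg (fun h => hA h.2), if_neg (fun h => hA h.2.2), if_neg (fun h => hA h.2.2)]
      ring
  · rw [if_neg (fun h => hD h.1), if_neg (fun h => hD h.1), if_neg (fun h => hD h.1)]
    ring

lemma freqB_eq_freq2 {L M : ℕ} (q : (Fin L → Bool) × (Fin M → Bool) → ℝ)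
    (S : Finset (Fin L)) (T : Finset (Fin M)) (a : Fin L → Bool) (b : Fin M → Bool)
    (ha : ∀ i ∈ S, a i = true) (hb : ∀ j ∈ T, b j = true) :
    freqB q S T a b = freq2 q S T := by
  refine Finset.sum_congr rfl fun x _ => ?_
  have h : ((∀ i ∈ S, x.1 i = a i) ∧ (∀ j ∈ T, x.2 j = b j))
      ↔ ((∀ i ∈ S, x.1 i = true) ∧ (∀ j ∈ T, x.2 j = true)) := by
    constructor
    · rintro ⟨h1, h2⟩
      exact ⟨fun i hi => (h1 i hi).trans (ha i hi), fun j hj => (h2 j hj).trans (hb j hj)⟩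
    · rintro ⟨h1, h2⟩
      exact ⟨fun i hi => (h1 i hi).trans (ha i hi).symm,
        fun j hj => (h2 j hj).trans (hb j hj).symm⟩
  simp only [h]

lemma freqB_agree {L M : ℕ} (p q : (Fin L → Bool) × (Fin M → Bool) → ℝ)
    (S0 : Finset (Fin L)) (T0 : Finset (Fin M))
    (hagree : ∀ S ⊆ S0, ∀ T ⊆ T0, freq2 q S T = freq2 p S T) :
    ∀ (n : ℕ) (S : Finset (Fin L)) (T : Finset (Fin M)) (a : Fin L → Bool)
      (b : Fin M → Bool), S ⊆ S0 → T ⊆ T0 →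
      (S.filter (fun i => a i = false)).card
        + (T.filter (fun j => b j = false)).card = n →
      freqB q S T a b = freqB p S T a b := by
  intro n
  induction n with
  | zero =>
      intro S T a b hS hT h
      have h1 : ∀ i ∈ S, a i = true := by
        intro i hi
        by_contra hcon
        have : i ∈ S.filter (fun i => a i = false) :=
          Finset.mem_filter.2 ⟨hi, by simpa using hcon⟩
        have := Finset.card_pos.2 ⟨i, this⟩
        omega
      have h2 : ∀ j ∈ T, b j = true := by
        intro j hj
        by_contra hcon
        have : j ∈ T.filter (fun j => b j = false) :=
          Finset.mem_filter.2 ⟨hj, by simpa using hcon⟩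
        have := Finset.card_pos.2 ⟨j, this⟩
        omega
      rw [freqB_eq_freq2 q S T a b h1 h2, freqB_eq_freq2 p S T a b h1 h2]
      exact hagree S hS T hT
  | succ n ih =>
      intro S T a b hS hT h
      rcases (S.filter (fun i => a i = false)).eq_empty_or_nonempty with hA | hA
      · -- pick from T side
        have hTpos : (T.filter (fun j => b j = false)).Nonempty := by
          rw [hA] at h
          simp at h
          exact Finset.card_pos.1 (by omega)
        obtain ⟨i, hi⟩ := hTpos
        obtain ⟨hiT, hbi⟩ := Finset.mem_filter.1 hi
        have hbi' : b i = false := by simpa using hbi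
        have hsplitq := freqB_split_right q S T a b i hiT hbi'
        have hsplitp := freqB_split_right p S T a b i hiT hbi'
        have e1 : freqB q S (T.erase i) a b = freqB p S (T.erase i) a b := by
          refine ih S (T.erase i) a b hS ((Finset.erase_subset _ _).trans hT) ?_
          rw [Finset.filter_erase, Finset.card_erase_of_mem hi]
          have := Finset.card_pos.2 ⟨i, hi⟩
          omega
        have e2 : freqB q S T a (Function.update b i true)
            = freqB p S T a (Function.update b i true) := by
          refine ih S T a _ hS hT ?_
          have hfe : T.filter (fun j => Function.update b i true j = false)
              = (T.filter (fun j => b j = false)).erase i := by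
            ext j
            simp only [Finset.mem_filter, Finset.mem_erase, Function.update_apply]
            by_cases hji : j = i
            · subst hji; simp
            · simp [hji]
          rw [hfe, Finset.card_erase_of_mem hi]
          have := Finset.card_pos.2 ⟨i, hi⟩
          omega
        linarith
      · obtain ⟨i, hi⟩ := hA
        obtain ⟨hiS, hai⟩ := Finset.mem_filter.1 hi
        have hai' : a i = false := by simpa using hai
        have hsplitq := freqB_split_left q S T a b i hiS hai'
        have hsplitp := freqB_split_left p S T a b i hiS hai'
        have e1 : freqB q (S.erase i) T a b = freqB p (S.erase i) T a b := by
          refine ih (S.erase i) T a b ((Finset.erase_subset _ _).trans hS) hT ?_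
          rw [Finset.filter_erase, Finset.card_erase_of_mem hi]
          have := Finset.card_pos.2 ⟨i, hi⟩
          omega
        have e2 : freqB q S T (Function.update a i true) b
            = freqB p S T (Function.update a i true) b := by
          refine ih S T _ b hS hT ?_
          have hfe : S.filter (fun j => Function.update a i true j = false)
              = (S.filter (fun j => a j = false)).erase i := by
            ext j
            simp only [Finset.mem_filter, Finset.mem_erase, Function.update_apply]
            by_cases hji : j = i
            · subst hji; simp
            · simp [hji]
          rw [hfe, Finset.card_erase_of_mem hi]
          have := Finset.card_pos.2 ⟨i, hi⟩
          omega
        linarith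

/-- If `q` agrees with the construction distribution `p` on the frequencies of the
antimonotonic family generated by the clause itemsets, then `q(W=1) > 0` implies
that `R` is satisfiable. -/
theorem positive_freq_implies_sat {L M : ℕ} (R : Fin M → Fin 3 → Fin L × Bool)
    (q : (Fin L → Bool) × (Fin M → Bool) → ℝ) (hq : IsDist q)
    (hagree : ∀ (i : Fin M) (S : Finset (Fin L)) (T : Finset (Fin M)),
      S ⊆ clauseVars R i → T ⊆ {i} → freq2 q S T = freq2 (constr R) S T)
    (hpos : 0 < freq2 q ∅ Finset.univ) :
    ∃ t : Fin L → Bool, ∀ i, clauseVal R t i = true := by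
  classical
  have hterm : ∃ x : (Fin L → Bool) × (Fin M → Bool),
      (if (∀ i ∈ (∅ : Finset (Fin L)), x.1 i = true)
          ∧ (∀ j ∈ (Finset.univ : Finset (Fin M)), x.2 j = true)
        then q x else 0) ≠ 0 := by
    by_contra hcon
    push_neg at hcon
    have : freq2 q ∅ Finset.univ = 0 := Finset.sum_eq_zero fun x _ => hcon x
    linarith
  obtain ⟨x, hx⟩ := hterm
  by_cases hc : (∀ i ∈ (∅ : Finset (Fin L)), x.1 i = true)
      ∧ (∀ j ∈ (Finset.univ : Finset (Fin M)), x.2 j = true)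
  swap
  · rw [if_neg hc] at hx; exact absurd rfl hx
  rw [if_pos hc] at hx
  have hqx : 0 < q x := lt_of_le_of_ne (hq.1 x) (Ne.symm hx)
  refine ⟨x.1, fun i => ?_⟩
  by_contra hcl
  have hcl' : clauseVal R x.1 i = false := by
    cases hcv : clauseVal R x.1 i
    · rfl
    · exact absurd hcv hcl
  have hge : q x ≤ freqB q (clauseVars R i) {i} x.1 (fun _ => true) := by
    unfold freqB
    have hx0 : (if (∀ j ∈ clauseVars R i, x.1 j = x.1 j)
        ∧ (∀ j ∈ ({i} : Finset (Fin M)), x.2 j = (fun _ => true) j)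
        then q x else 0) = q x :=
      if_pos ⟨fun _ _ => rfl, fun j _ => hc.2 j (Finset.mem_univ j)⟩
    have hle := Finset.single_le_sum
      (f := fun y : (Fin L → Bool) × (Fin M → Bool) =>
        if (∀ j ∈ clauseVars R i, y.1 j = x.1 j)
          ∧ (∀ j ∈ ({i} : Finset (Fin M)), y.2 j = (fun _ => true) j)
        then q y else 0)
      (fun y _ => by
        simp only []
        split_ifs with h
        · exact hq.1 y
        · exact le_rfl)
      (Finset.mem_univ x)
    exact le_trans (le_of_eq hx0.symm) hle
  have hagr : freqB q (clauseVars R i) {i} x.1 (fun _ => true)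
      = freqB (constr R) (clauseVars R i) {i} x.1 (fun _ => true) :=
    freqB_agree (constr R) q (clauseVars R i) {i}
      (fun S hS T hT => hagree i S T hS hT) _ _ _ _ _
      (subset_refl _) (subset_refl _) rfl
  have hzero : freqB (constr R) (clauseVars R i) {i} x.1 (fun _ => true) = 0 := by
    refine Finset.sum_eq_zero fun y _ => ?_
    split_ifs with hcond
    · obtain ⟨h1, h2⟩ := hcond
      unfold constr
      rw [if_neg]
      intro hy
      have hyi : y.2 i = clauseVal R y.1 i := by rw [hy]
      have hcv : clauseVal R y.1 i = clauseVal R x.1 i := by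
        unfold clauseVal
        apply decide_eq_decide.mpr
        apply exists_congr
        intro j
        rw [h1 (R i j).1 (Finset.mem_image.2 ⟨j, Finset.mem_univ j, rfl⟩)]
      have := h2 i (Finset.mem_singleton_self i)
      rw [hyi, hcv, hcl'] at this
      exact Bool.false_ne_true this
    · rfl
  rw [hagr, hzero] at hge
  linarith
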